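/- The countable decoupled system ẋᵢ = -xᵢ³, i ∈ ℕ, is not uniformly globally asymptotically stable in the ℓ_p norm for any p ∈ [1,∞). More precisely: each scalar solution with initial value r > 0 is x(t) = r/√(1+2r²t), and there cannot exist β ∈ 𝒦ℒ such that for all initial states x⁰ ∈ ℓ_p and all t ≥ 0 the solution satisfies ‖x(t)‖_{ℓ_p} ≤ β(‖x⁰‖_{ℓ_p}, t). (Counterexample: for fixed t, choosing initial conditions x⁰ with all mass on coordinates of magnitude ε → 0 but constant ℓ_p norm shows the decay cannot be uniform.) -/

import Mathlib

open Filter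


lemma scalar_deriv (r t : ℝ) (hr : 0 < r) (ht : 0 ≤ t) :
    HasDerivAt (fun τ : ℝ => r / Real.sqrt (1 + 2 * r ^ 2 * τ))
      (-(r / Real.sqrt (1 + 2 * r ^ 2 * t)) ^ 3) t := by
  have hg : (0:ℝ) < 1 + 2 * r ^ 2 * t := by positivity
  have hs : 0 < Real.sqrt (1 + 2 * r ^ 2 * t) := Real.sqrt_pos.2 hg
  have h1 : HasDerivAt (fun τ : ℝ => 1 + 2 * r ^ 2 * τ) (2 * r ^ 2) t := by
    simpa using ((hasDerivAt_id t).const_mul (2 * r ^ 2)).const_add 1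
  have h2 : HasDerivAt (fun τ => Real.sqrt (1 + 2 * r ^ 2 * τ))
      (1 / (2 * Real.sqrt (1 + 2 * r ^ 2 * t)) * (2 * r ^ 2)) t :=
    (Real.hasDerivAt_sqrt hg.ne').comp t h1
  have h3 := (hasDerivAt_const t r).div h2 hs.ne'
  refine h3.congr_deriv ?_
  symm
  have hsq : Real.sqrt (1 + 2 * r ^ 2 * t) ^ 2 = 1 + 2 * r ^ 2 * t := Real.sq_sqrt hg.le
  field_simp
  set s := Real.sqrt (1 + 2 * r ^ 2 * t) with hsdef
  linear_combination


lemma step_memℓp (p : ENNReal) (hp : 0 < p.toReal) (N : ℕ) (c : ℝ) :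
    Memℓp (fun i : ℕ => if i < N then c else (0:ℝ)) p := by
  apply memℓp_gen
  apply summable_of_ne_finset_zero (s := Finset.range N)
  intro i hi
  rw [Finset.mem_range] at hi
  simp [hi, Real.zero_rpow hp.ne']

lemma step_norm (p : ENNReal) (hp : 0 < p.toReal) (N : ℕ) (c : ℝ) (hc : 0 ≤ c) :
    ‖(⟨fun i : ℕ => if i < N then c else (0:ℝ), step_memℓp p hp N c⟩ :
        lp (fun _ : ℕ => ℝ) p)‖ = ((N : ℝ) * c ^ p.toReal) ^ (1 / p.toReal) := by
  rw [lp.norm_eq_tsum_rpow hp]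
  congr 1
  rw [tsum_eq_sum (s := Finset.range N) (f := fun i =>
      ‖(if i < N then c else (0:ℝ))‖ ^ p.toReal) ?_]
  · rw [Finset.sum_congr rfl (fun i hi => by
      rw [Finset.mem_range] at hi
      rw [if_pos hi, Real.norm_eq_abs, abs_of_nonneg hc] : ∀ i ∈ Finset.range N,
        ‖(if i < N then c else (0:ℝ))‖ ^ p.toReal = c ^ p.toReal)]
    simp [Finset.sum_const]
  · intro i hi
    rw [Finset.mem_range] at hi
    simp [hi, Real.zero_rpow hp.ne']


/-- A class 𝒦 comparison function: continuous, strictly increasing on ℝ₊, zero at zero. -/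
def IsClassK (γ : ℝ → ℝ) : Prop :=
  ContinuousOn γ (Set.Ici 0) ∧ StrictMonoOn γ (Set.Ici 0) ∧ γ 0 = 0

/-- A class 𝒦_∞ comparison function: class 𝒦 and unbounded. -/
def IsClassKinf (γ : ℝ → ℝ) : Prop :=
  IsClassK γ ∧ Filter.Tendsto γ Filter.atTop Filter.atTop

/-- A class 𝒦ℒ comparison function. -/
def IsClassKL (β : ℝ → ℝ → ℝ) : Prop :=
  ContinuousOn (fun p : ℝ × ℝ => β p.1 p.2) (Set.Ici 0 ×ˢ Set.Ici 0) ∧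
  (∀ t, 0 ≤ t → IsClassK fun r => β r t) ∧
  (∀ r, 0 < r → StrictAntiOn (fun t => β r t) (Set.Ici 0) ∧
    Filter.Tendsto (fun t => β r t) Filter.atTop (nhds 0))

/-- the countable decoupled system `ẋᵢ = -xᵢ³`, `i ∈ ℕ`, whose scalar
solutions with initial value `r > 0` are `x(t) = r/√(1+2r²t)`, is not 0-UGAS in
the `ℓ_p` norm for any `p ∈ [1,∞)`: there is no `β ∈ 𝒦ℒ` bounding all solutions by
`β(‖x⁰‖_{ℓ_p}, t)`. -/
theorem lp_system_not_UGAS (p : ENNReal) (hp1 : 1 ≤ p) (hp2 : p ≠ ⊤) :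
    (∀ r : ℝ, 0 < r →
      r / Real.sqrt (1 + 2 * r ^ 2 * 0) = r ∧
      ∀ t : ℝ, 0 ≤ t →
        HasDerivAt (fun τ : ℝ => r / Real.sqrt (1 + 2 * r ^ 2 * τ))
          (-(r / Real.sqrt (1 + 2 * r ^ 2 * t)) ^ 3) t) ∧
    ¬ ∃ β : ℝ → ℝ → ℝ, IsClassKL β ∧
        ∀ (x : lp (fun _ : ℕ => ℝ) p) (t : ℝ), 0 ≤ t →
          ∀ y : lp (fun _ : ℕ => ℝ) p,
            (∀ i : ℕ, y i = x i / Real.sqrt (1 + 2 * (x i) ^ 2 * t)) →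
            ‖y‖ ≤ β ‖x‖ t := by
  refine ⟨fun r hr => ⟨by simp, fun t ht => scalar_deriv r t hr ht⟩, ?_⟩
  rintro ⟨β, hβ, hbound⟩
  set pr := p.toReal with hprdef
  have hpr : 0 < pr := ENNReal.toReal_pos (fun h => by simp [h] at hp1) hp2
  have htend := (hβ.2.2 1 one_pos).2
  obtain ⟨t, ht0, htβ⟩ : ∃ t, 0 ≤ t ∧ β 1 t < 1/2 := by
    rcases ((htend.eventually_lt_const (by norm_num : (0:ℝ) < 1/2)).and
      (eventually_ge_atTop (0:ℝ))).exists with ⟨t, h1, h2⟩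
    exact ⟨t, h2, h1⟩
  have hδ : (0:ℝ) < min 1 (1+t)⁻¹ := by
    have : (0:ℝ) < 1 + t := by linarith
    positivity
  have hNev : ∀ᶠ n : ℕ in atTop, (n:ℝ) ^ (-(1/pr)) ≤ min 1 (1+t)⁻¹ := by
    have h := (tendsto_rpow_neg_atTop (y := 1/pr) (by positivity)).comp
      (tendsto_natCast_atTop_atTop (R := ℝ))
    exact (h.eventually_lt_const hδ).mono fun n hn => hn.le
  obtain ⟨N, hNle, hN1⟩ := (hNev.and (eventually_ge_atTop 1)).exists
  have hN0 : (0:ℝ) < N := by exact_mod_cast Nat.lt_of_lt_of_le Nat.zero_lt_one hN1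
  set c : ℝ := (N:ℝ) ^ (-(1/pr)) with hcdef
  have hc0 : 0 < c := Real.rpow_pos_of_pos hN0 _
  have hc1 : c ≤ 1 := hNle.trans (min_le_left _ _)
  have hct : c * (1 + t) ≤ 1 := by
    have h2 : c ≤ (1+t)⁻¹ := hNle.trans (min_le_right _ _)
    have h3 : (0:ℝ) < 1 + t := by linarith
    calc c * (1+t) ≤ (1+t)⁻¹ * (1+t) := by nlinarith
    _ = 1 := inv_mul_cancel₀ h3.ne'
  have hcpr : c ^ pr = (N:ℝ)⁻¹ := by
    rw [hcdef, ← Real.rpow_mul hN0.le]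
    have h1 : -(1/pr) * pr = -1 := by field_simp
    rw [h1, Real.rpow_neg_one]
  have hNcp : (N:ℝ) * c ^ pr = 1 := by
    rw [hcpr, mul_inv_cancel₀ hN0.ne']
  set x : lp (fun _ : ℕ => ℝ) p :=
    ⟨fun i : ℕ => if i < N then c else (0:ℝ), step_memℓp p hpr N c⟩ with hxdef
  have hxnorm : ‖x‖ = 1 := by
    rw [hxdef, step_norm p hpr N c hc0.le, hNcp, Real.one_rpow]
  set s : ℝ := Real.sqrt (1 + 2 * c ^ 2 * t) with hsdef
  have hs0 : 0 < s := Real.sqrt_pos.2 (by positivity)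
  have hs2 : s ≤ 2 := by
    have h4 : 1 + 2 * c ^ 2 * t ≤ 4 := by nlinarith [mul_nonneg hc0.le ht0]
    calc s ≤ Real.sqrt 4 := Real.sqrt_le_sqrt h4
    _ = 2 := by rw [show (4:ℝ) = 2^2 by norm_num, Real.sqrt_sq (by norm_num)]
  set y : lp (fun _ : ℕ => ℝ) p :=
    ⟨fun i : ℕ => if i < N then c / s else (0:ℝ), step_memℓp p hpr N (c/s)⟩ with hydef
  have hy : ∀ i : ℕ, y i = x i / Real.sqrt (1 + 2 * (x i) ^ 2 * t) := by
    intro i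
    by_cases h : i < N
    · have hxi : (x : ∀ _ : ℕ, ℝ) i = c := if_pos h
      have hyi : (y : ∀ _ : ℕ, ℝ) i = c / s := if_pos h
      rw [hyi, hxi, hsdef]
    · have hxi : (x : ∀ _ : ℕ, ℝ) i = 0 := if_neg h
      have hyi : (y : ∀ _ : ℕ, ℝ) i = 0 := if_neg h
      rw [hyi, hxi]
      norm_num
  have hynorm : ‖y‖ = 1 / s := by
    rw [hydef, step_norm p hpr N (c/s) (by positivity),
      Real.div_rpow hc0.le hs0.le, ← mul_div_assoc, hNcp,
      Real.div_rpow (by norm_num) (Real.rpow_nonneg hs0.le _),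
      Real.one_rpow, ← Real.rpow_mul hs0.le]
    have h1 : pr * (1/pr) = 1 := by field_simp
    rw [h1, Real.rpow_one]
  have hineq := hbound x t ht0 y hy
  rw [hxnorm, hynorm] at hineq
  have : (1:ℝ)/2 ≤ 1/s := one_div_le_one_div_of_le hs0 hs2
  linarith
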